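/- arXiv:2510.03420 — 7 statements merged into one kernel-verified Lean document; each statement's English description precedes it below -/
import Mathlib

section
/- Fix n ≥ 1, a step size Δt > 0 and grid times t^k = kΔt. For each i ∈ {1,…,n} let f_i, g_i, A_i, B_i : ℝ₊ × int(ℝ₊ⁿ) → ℝ be nonnegative functions, let φ_i(Δt, t, y) be a function that is strictly positive for all Δt > 0 and (t,y) ∈ ℝ₊ × int(ℝ₊ⁿ), and let ψ_i(Δt) be a function with ψ_i(Δt) > 0 for all Δt > 0. Then for every y^k ∈ int(ℝ₊ⁿ) the implicit update equation (y_i^{k+1} − y_i^k)/φ_i(Δt, t^k, y^k) = f_i(t^k, y^k) − y_i^{k+1} g_i(t^k, y^k) + ψ_i(Δt)·(A_i(t^k, y^k) − (y_i^{k+1}/y_i^k) B_i(t^k, y^k)) has a unique solution y_i^{k+1}, given explicitly by y_i^{k+1} = (y_i^k + φ_i f_i(t^k,y^k) + φ_i ψ_i A_i(t^k,y^k)) / (1 + φ_i g_i(t^k,y^k) + φ_i ψ_i B_i(t^k,y^k)/y_i^k), and this solution satisfies y_i^{k+1} > 0. Consequently, if y^0 ∈ int(ℝ₊ⁿ), then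 the NSFD iterates satisfy y^k ∈ int(ℝ₊ⁿ) for all k ≥ 1 and for every step size Δt > 0. -/
open Set

/-- positivity preservation (Theorem 1) of the new NSFD method.
The implicit update equation has a unique solution, given by the explicit
formula, which is positive; consequently iterates starting in the open
positive orthant stay in it. -/
theorem stmt0
    (n : ℕ) (hn : 1 ≤ n) (Δt : ℝ) (hΔt : 0 < Δt)
    (f g A B : Fin n → ℝ → (Fin n → ℝ) → ℝ)
    (φ : Fin n → ℝ → ℝ → (Fin n → ℝ) → ℝ)
    (ψ : Fin n → ℝ → ℝ)
    (hf : ∀ i t y, 0 ≤ t → (∀ j, 0 < y j) → 0 ≤ f i t y)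
    (hg : ∀ i t y, 0 ≤ t → (∀ j, 0 < y j) → 0 ≤ g i t y)
    (hA : ∀ i t y, 0 ≤ t → (∀ j, 0 < y j) → 0 ≤ A i t y)
    (hB : ∀ i t y, 0 ≤ t → (∀ j, 0 < y j) → 0 ≤ B i t y)
    (hφ : ∀ i s t y, 0 < s → 0 ≤ t → (∀ j, 0 < y j) → 0 < φ i s t y)
    (hψ : ∀ i s, 0 < s → 0 < ψ i s) :
    -- the explicit formula is the unique solution of the implicit update
    -- equation and it is strictly positive
    (∀ (k : ℕ) (yk : Fin n → ℝ), (∀ j, 0 < yk j) → ∀ i : Fin n,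
      (0 < (yk i + φ i Δt (k * Δt) yk * f i (k * Δt) yk
              + φ i Δt (k * Δt) yk * ψ i Δt * A i (k * Δt) yk) /
            (1 + φ i Δt (k * Δt) yk * g i (k * Δt) yk
              + φ i Δt (k * Δt) yk * ψ i Δt * B i (k * Δt) yk / yk i)) ∧
      (∀ z : ℝ,
        ((z - yk i) / φ i Δt (k * Δt) yk =
          f i (k * Δt) yk - z * g i (k * Δt) yk +
            ψ i Δt * (A i (k * Δt) yk - (z / yk i) * B i (k * Δt) yk))
        ↔ z = (yk i + φ i Δt (k * Δt) yk * f i (k * Δt) yk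
              + φ i Δt (k * Δt) yk * ψ i Δt * A i (k * Δt) yk) /
            (1 + φ i Δt (k * Δt) yk * g i (k * Δt) yk
              + φ i Δt (k * Δt) yk * ψ i Δt * B i (k * Δt) yk / yk i)))
    ∧
    -- consequently, NSFD iterates preserve the open positive orthant
    (∀ y : ℕ → Fin n → ℝ, (∀ j, 0 < y 0 j) →
      (∀ (k : ℕ) (i : Fin n),
        (y (k + 1) i - y k i) / φ i Δt (k * Δt) (y k) =
          f i (k * Δt) (y k) - y (k + 1) i * g i (k * Δt) (y k) +
            ψ i Δt * (A i (k * Δt) (y k)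
              - (y (k + 1) i / y k i) * B i (k * Δt) (y k))) →
      ∀ (k : ℕ) (j : Fin n), 0 < y k j) := by
  have key : ∀ (k : ℕ) (yk : Fin n → ℝ), (∀ j, 0 < yk j) → ∀ i : Fin n,
      (0 < (yk i + φ i Δt (k * Δt) yk * f i (k * Δt) yk
              + φ i Δt (k * Δt) yk * ψ i Δt * A i (k * Δt) yk) /
            (1 + φ i Δt (k * Δt) yk * g i (k * Δt) yk
              + φ i Δt (k * Δt) yk * ψ i Δt * B i (k * Δt) yk / yk i)) ∧
      (∀ z : ℝ,
        ((z - yk i) / φ i Δt (k * Δt) yk =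
          f i (k * Δt) yk - z * g i (k * Δt) yk +
            ψ i Δt * (A i (k * Δt) yk - (z / yk i) * B i (k * Δt) yk))
        ↔ z = (yk i + φ i Δt (k * Δt) yk * f i (k * Δt) yk
              + φ i Δt (k * Δt) yk * ψ i Δt * A i (k * Δt) yk) /
            (1 + φ i Δt (k * Δt) yk * g i (k * Δt) yk
              + φ i Δt (k * Δt) yk * ψ i Δt * B i (k * Δt) yk / yk i)) := by
    intro k yk hyk i
    have htnn : (0:ℝ) ≤ k * Δt := by positivity
    have hφ' := hφ i Δt (k * Δt) yk hΔt htnn hyk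
    have hψ' := hψ i Δt hΔt
    have hyi := hyk i
    have hf' := hf i (k * Δt) yk htnn hyk
    have hg' := hg i (k * Δt) yk htnn hyk
    have hA' := hA i (k * Δt) yk htnn hyk
    have hB' := hB i (k * Δt) yk htnn hyk
    have h1 : 0 ≤ φ i Δt (k * Δt) yk * f i (k * Δt) yk := mul_nonneg hφ'.le hf'
    have h2 : 0 ≤ φ i Δt (k * Δt) yk * ψ i Δt * A i (k * Δt) yk :=
      mul_nonneg (mul_nonneg hφ'.le hψ'.le) hA'
    have h3 : 0 ≤ φ i Δt (k * Δt) yk * g i (k * Δt) yk := mul_nonneg hφ'.le hg'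
    have h4 : 0 ≤ φ i Δt (k * Δt) yk * ψ i Δt * B i (k * Δt) yk / yk i :=
      div_nonneg (mul_nonneg (mul_nonneg hφ'.le hψ'.le) hB') hyi.le
    have hN : 0 < yk i + φ i Δt (k * Δt) yk * f i (k * Δt) yk
        + φ i Δt (k * Δt) yk * ψ i Δt * A i (k * Δt) yk := by linarith
    have hD : 0 < 1 + φ i Δt (k * Δt) yk * g i (k * Δt) yk
        + φ i Δt (k * Δt) yk * ψ i Δt * B i (k * Δt) yk / yk i := by linarith
    refine ⟨div_pos hN hD, fun z => ?_⟩
    rw [div_eq_iff hφ'.ne', eq_div_iff hD.ne']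
    constructor <;> intro h
    · field_simp at h ⊢
      linear_combination h
    · field_simp at h ⊢
      linear_combination h
  refine ⟨key, ?_⟩
  intro y hy0 heq k
  induction k with
  | zero => exact hy0
  | succ k ih =>
    intro j
    have h := ((key k (y k) ih j).2 (y (k + 1) j)).mp (heq k j)
    rw [h]
    exact (key k (y k) ih j).1
end

section
/- Fix real numbers y_i > 0, F_i ∈ ℝ, g_i ≥ 0, A_i ≥ 0, B_i ≥ 0, and let φ, ψ : ℝ → ℝ be twice continuously differentiable functions with φ(0) = 0, φ'(0) = 1, ψ(0) = 0 and ψ'(0) = κ. Define V_i(h) = y_i + (φ(h) F_i + φ(h) ψ(h) (A_i − B_i)) / (1 + φ(h) g_i + φ(h) ψ(h) B_i / y_i). Then V_i(0) = y_i, V_i'(0) = F_i, and V_i''(0) = F_i (φ''(0) − 2 g_i) + 2κ (A_i − B_i). -/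
/-- Taylor-coefficient identities (eq. (11)) of the one-step map
of the new NSFD method. -/
theorem stmt2
    (yi Fi gi Ai Bi κ : ℝ)
    (hyi : 0 < yi) (hgi : 0 ≤ gi) (hAi : 0 ≤ Ai) (hBi : 0 ≤ Bi)
    (φ ψ : ℝ → ℝ)
    (hφ : ContDiff ℝ 2 φ) (hψ : ContDiff ℝ 2 ψ)
    (hφ0 : φ 0 = 0) (hφ'0 : deriv φ 0 = 1)
    (hψ0 : ψ 0 = 0) (hψ'0 : deriv ψ 0 = κ)
    (V : ℝ → ℝ)
    (hV : ∀ h : ℝ, V h = yi +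
      (φ h * Fi + φ h * ψ h * (Ai - Bi)) /
        (1 + φ h * gi + φ h * ψ h * Bi / yi)) :
    V 0 = yi ∧ deriv V 0 = Fi ∧
      deriv (deriv V) 0 = Fi * (deriv (deriv φ) 0 - 2 * gi) + 2 * κ * (Ai - Bi) := by
  have hyne : yi ≠ 0 := ne_of_gt hyi
  set c : ℝ := Ai - Bi with hc
  set b : ℝ := Bi / yi with hb
  set N : ℝ → ℝ := fun h => φ h * Fi + φ h * ψ h * c with hNdef
  set D : ℝ → ℝ := fun h => 1 + φ h * gi + φ h * ψ h * b with hDdef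
  have hVeq : V = fun h => yi + N h / D h := by
    funext h
    rw [hV h, hNdef, hDdef, hb, hc]
    ring_nf
  -- basic differentiability facts
  have hφ2 : ContDiff ℝ (1 + 1) φ := by norm_num; exact hφ
  have hψ2 : ContDiff ℝ (1 + 1) ψ := by norm_num; exact hψ
  have hφdiff : Differentiable ℝ φ := (contDiff_succ_iff_deriv.mp hφ2).1
  have hψdiff : Differentiable ℝ ψ := (contDiff_succ_iff_deriv.mp hψ2).1
  have hφ'diff : Differentiable ℝ (deriv φ) :=
    ((contDiff_succ_iff_deriv.mp hφ2).2.2).differentiable one_ne_zero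
  have hψ'diff : Differentiable ℝ (deriv ψ) :=
    ((contDiff_succ_iff_deriv.mp hψ2).2.2).differentiable one_ne_zero
  -- first derivatives of N and D
  set n : ℝ → ℝ := fun h => deriv φ h * Fi + (deriv φ h * ψ h + φ h * deriv ψ h) * c with hndef
  set d : ℝ → ℝ := fun h => deriv φ h * gi + (deriv φ h * ψ h + φ h * deriv ψ h) * b with hddef
  have hNder : ∀ h : ℝ, HasDerivAt N (n h) h := by
    intro h
    have h1 := (hφdiff h).hasDerivAt
    have h2 := (hψdiff h).hasDerivAt
    exact (h1.mul_const Fi).add ((h1.mul h2).mul_const c)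
  have hDder : ∀ h : ℝ, HasDerivAt D (d h) h := by
    intro h
    have h1 := (hφdiff h).hasDerivAt
    have h2 := (hψdiff h).hasDerivAt
    have := ((h1.mul_const gi).add ((h1.mul h2).mul_const b)).const_add 1
    simpa [hDdef, hddef, add_assoc] using this
  set W : ℝ → ℝ := fun h => (n h * D h - N h * d h) / (D h) ^ 2 with hWdef
  have hVder : ∀ h : ℝ, D h ≠ 0 → HasDerivAt V (W h) h := by
    intro h hDne
    have := ((hNder h).div (hDder h) hDne).const_add yi
    rw [hVeq]
    simpa [hWdef] using this
  -- values at 0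
  have hD0 : D 0 = 1 := by simp [hDdef, hφ0]
  have hN0 : N 0 = 0 := by simp [hNdef, hφ0]
  have hn0 : n 0 = Fi := by simp [hndef, hφ0, hψ0, hφ'0]
  have hd0 : d 0 = gi := by simp [hddef, hφ0, hψ0, hφ'0]
  have hD0ne : D 0 ≠ 0 := by rw [hD0]; norm_num
  -- part 1
  have part1 : V 0 = yi := by rw [hVeq]; simp [hN0, hD0]
  -- part 2
  have part2 : deriv V 0 = Fi := by
    rw [(hVder 0 hD0ne).deriv, hWdef]
    simp [hn0, hN0, hD0]
  -- eventual equality of deriv V with W near 0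
  have hDcont : Continuous D := by
    rw [hDdef]
    fun_prop
  have hUev : ∀ᶠ h in nhds 0, D h ≠ 0 :=
    hDcont.continuousAt.eventually_ne hD0ne
  have hdVW : deriv V =ᶠ[nhds 0] W := by
    filter_upwards [hUev] with h hh
    exact (hVder h hh).deriv
  have key : deriv (deriv V) 0 = deriv W 0 := hdVW.deriv_eq
  -- second-derivative data at 0
  have Hφ : HasDerivAt φ 1 0 := hφ'0 ▸ (hφdiff 0).hasDerivAt
  have Hψ : HasDerivAt ψ κ 0 := hψ'0 ▸ (hψdiff 0).hasDerivAt
  have Hφ' : HasDerivAt (deriv φ) (deriv (deriv φ) 0) 0 := (hφ'diff 0).hasDerivAt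
  have Hψ' : HasDerivAt (deriv ψ) (deriv (deriv ψ) 0) 0 := (hψ'diff 0).hasDerivAt
  have Hn : HasDerivAt n
      (deriv (deriv φ) 0 * Fi +
        ((deriv (deriv φ) 0 * ψ 0 + deriv φ 0 * κ) + (1 * deriv ψ 0 + φ 0 * deriv (deriv ψ) 0)) * c)
      0 :=
    (Hφ'.mul_const Fi).add (((Hφ'.mul Hψ).add (Hφ.mul Hψ')).mul_const c)
  have Hd : HasDerivAt d
      (deriv (deriv φ) 0 * gi +
        ((deriv (deriv φ) 0 * ψ 0 + deriv φ 0 * κ) + (1 * deriv ψ 0 + φ 0 * deriv (deriv ψ) 0)) * b)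
      0 :=
    (Hφ'.mul_const gi).add (((Hφ'.mul Hψ).add (Hφ.mul Hψ')).mul_const b)
  have HN : HasDerivAt N (n 0) 0 := hNder 0
  have HD : HasDerivAt D (d 0) 0 := hDder 0
  -- derivative of W at 0
  have HP := (Hn.mul HD).sub (HN.mul Hd)
  have HQ : HasDerivAt (fun h => (D h) ^ 2) ((2 : ℕ) * D 0 ^ (2 - 1) * d 0) 0 := HD.pow 2
  have hQ0ne : (D 0) ^ 2 ≠ 0 := by rw [hD0]; norm_num
  have HW := HP.div HQ hQ0ne
  have part3 : deriv W 0 = Fi * (deriv (deriv φ) 0 - 2 * gi) + 2 * κ * (Ai - Bi) := by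
    rw [show W = ((n * D - N * d) / fun h => D h ^ 2) from rfl, HW.deriv]
    simp only [Pi.sub_apply, Pi.mul_apply]
    rw [hn0, hd0, hN0, hD0, hφ0, hψ0, hφ'0, hψ'0, hc]
    push_cast
    ring
  exact ⟨part1, part2, key.trans part3⟩
end

section
/- Fix n ≥ 1, a step size Δt > 0 and grid times t^k = kΔt. For each i ∈ {1,…,n} let f_i, g_i : ℝ₊ × int(ℝ₊ⁿ) → ℝ be nonnegative functions and let φ_i(Δt, t, y) be strictly positive for all Δt > 0 and (t,y) ∈ ℝ₊ × int(ℝ₊ⁿ). Then the explicit NSFD update y_i^{k+1} = (y_i^k + φ_i(Δt, t^k, y^k) f_i(t^k, y^k)) / (1 + φ_i(Δt, t^k, y^k) g_i(t^k, y^k)) maps int(ℝ₊ⁿ) into itself; consequently, if y^0 ∈ int(ℝ₊ⁿ), then y^k ∈ int(ℝ₊ⁿ) for all k ≥ 1 and every step size Δt > 0. -/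
/-- the explicit NSFD scheme
y_i^{k+1} = (y_i^k + φ_i f_i)/(1 + φ_i g_i) preserves the open positive
orthant for every step size. -/
theorem stmt6
    (n : ℕ) (hn : 1 ≤ n) (Δt : ℝ) (hΔt : 0 < Δt)
    (f g : Fin n → ℝ → (Fin n → ℝ) → ℝ)
    (φ : Fin n → ℝ → ℝ → (Fin n → ℝ) → ℝ)
    (hf : ∀ i t y, 0 ≤ t → (∀ j, 0 < y j) → 0 ≤ f i t y)
    (hg : ∀ i t y, 0 ≤ t → (∀ j, 0 < y j) → 0 ≤ g i t y)
    (hφ : ∀ i s t y, 0 < s → 0 ≤ t → (∀ j, 0 < y j) → 0 < φ i s t y) :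
    -- the update maps the open positive orthant into itself
    (∀ (k : ℕ) (yk : Fin n → ℝ), (∀ j, 0 < yk j) → ∀ i : Fin n,
      0 < (yk i + φ i Δt (k * Δt) yk * f i (k * Δt) yk) /
            (1 + φ i Δt (k * Δt) yk * g i (k * Δt) yk))
    ∧
    -- consequently, iterates starting in the orthant stay in it
    (∀ y : ℕ → Fin n → ℝ, (∀ j, 0 < y 0 j) →
      (∀ (k : ℕ) (i : Fin n),
        y (k + 1) i = (y k i + φ i Δt (k * Δt) (y k) * f i (k * Δt) (y k)) /
          (1 + φ i Δt (k * Δt) (y k) * g i (k * Δt) (y k))) →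
      ∀ (k : ℕ) (j : Fin n), 0 < y k j) := by
  have key : ∀ (k : ℕ) (yk : Fin n → ℝ), (∀ j, 0 < yk j) → ∀ i : Fin n,
      0 < (yk i + φ i Δt (k * Δt) yk * f i (k * Δt) yk) /
            (1 + φ i Δt (k * Δt) yk * g i (k * Δt) yk) := by
    intro k yk hy i
    have ht : (0:ℝ) ≤ k * Δt := by positivity
    have hφp := hφ i Δt (k * Δt) yk hΔt ht hy
    have hfp := hf i (k * Δt) yk ht hy
    have hgp := hg i (k * Δt) yk ht hy
    have hnum : 0 < yk i + φ i Δt (k * Δt) yk * f i (k * Δt) yk := by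
      have := hy i; nlinarith
    have hden : 0 < 1 + φ i Δt (k * Δt) yk * g i (k * Δt) yk := by nlinarith
    exact div_pos hnum hden
  refine ⟨key, ?_⟩
  intro y h0 hrec k
  induction k with
  | zero => exact h0
  | succ k ih =>
    intro j
    rw [hrec k j]
    exact key k (y k) ih j
end

section
/- Let n ≥ 1, T > 0, and let F : [0,T] × ℝⁿ → ℝⁿ be continuous and locally Lipschitz in its second argument. Fix i ∈ {1,…,n} and suppose F_i(t, z) = 0 for every t ∈ [0,T] and every z ∈ ℝ₊ⁿ with z_i = 0. Let y : [0,T] → ℝⁿ be differentiable with y'(t) = F(t, y(t)) and y(t) ∈ ℝ₊ⁿ for all t ∈ [0,T]. If y_i(0) > 0, then y_i(t) > 0 for all t ∈ [0,T]. -/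
open Set

/-- if F_i vanishes on the face {z_i = 0} of the closed
positive orthant and the nonnegative solution starts with y_i(0) > 0,
then y_i(t) > 0 on [0,T]. -/
theorem stmt11
    (n : ℕ) (hn : 1 ≤ n) (T : ℝ) (hT : 0 < T)
    (F : ℝ → (Fin n → ℝ) → (Fin n → ℝ))
    (hFcont : ContinuousOn (Function.uncurry F) (Icc 0 T ×ˢ (univ : Set (Fin n → ℝ))))
    (hFlip : ∀ x : Fin n → ℝ, ∃ K : NNReal, ∃ ε : ℝ, 0 < ε ∧
      ∀ t ∈ Icc (0 : ℝ) T, LipschitzOnWith K (F t) (Metric.ball x ε))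
    (i : Fin n)
    (hFi : ∀ t ∈ Icc (0 : ℝ) T, ∀ z : Fin n → ℝ,
      (∀ j, 0 ≤ z j) → z i = 0 → F t z i = 0)
    (y : ℝ → (Fin n → ℝ))
    (hy : ∀ t ∈ Icc (0 : ℝ) T, HasDerivWithinAt y (F t (y t)) (Icc 0 T) t)
    (hynn : ∀ t ∈ Icc (0 : ℝ) T, ∀ j, 0 ≤ y t j)
    (h0 : 0 < y 0 i) :
    ∀ t ∈ Icc (0 : ℝ) T, 0 < y t i := by
  by_contra hcon
  push_neg at hcon
  obtain ⟨t₁, ht₁, ht₁le⟩ := hcon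
  -- y is continuous on Icc 0 T
  have hycont : ContinuousOn y (Icc 0 T) := fun t ht => (hy t ht).continuousWithinAt
  -- the set where y_i ≤ 0
  set S : Set ℝ := {t ∈ Icc (0:ℝ) T | y t i ≤ 0} with hS
  have hSne : S.Nonempty := ⟨t₁, ht₁, ht₁le⟩
  have hyic : ContinuousOn (fun t => y t i) (Icc 0 T) := fun t ht =>
    (continuous_apply i).continuousAt.comp_continuousWithinAt (hycont t ht)
  have hSclosed : IsClosed S := by
    have : S = Icc 0 T ∩ (fun t => y t i) ⁻¹' (Iic 0) := by
      ext t; simp [hS]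
    rw [this]
    exact hyic.preimage_isClosed_of_isClosed isClosed_Icc isClosed_Iic
  have hSbdd : BddBelow S := ⟨0, fun t ht => ht.1.1⟩
  set t₀ : ℝ := sInf S with ht₀def
  have ht₀S : t₀ ∈ S := hSclosed.csInf_mem hSne hSbdd
  have ht₀Icc : t₀ ∈ Icc (0:ℝ) T := ht₀S.1
  have ht₀i : y t₀ i = 0 := le_antisymm ht₀S.2 (hynn t₀ ht₀Icc i)
  have ht₀pos : 0 < t₀ := by
    rcases lt_or_eq_of_le ht₀Icc.1 with h | h
    · exact h
    · exfalso; rw [← h] at ht₀i; linarith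
  -- points before t₀ have y_i > 0
  have hpos : ∀ s ∈ Ico (0:ℝ) t₀, 0 < y s i := by
    intro s hs
    by_contra h
    push_neg at h
    have : s ∈ S := ⟨⟨hs.1, hs.2.le.trans ht₀Icc.2⟩, h⟩
    exact absurd (csInf_le hSbdd this) (not_le.mpr hs.2)
  -- local Lipschitz at y t₀
  obtain ⟨K, ε, hε, hK⟩ := hFlip (y t₀)
  -- continuity of y at t₀
  have hyc := (hycont t₀ ht₀Icc)
  rw [Metric.continuousWithinAt_iff] at hyc
  obtain ⟨δ, hδ, hδy⟩ := hyc (ε/2) (by linarith)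
  set s₀ : ℝ := max 0 (t₀ - δ/2) with hs₀def
  have hs₀0 : 0 ≤ s₀ := le_max_left _ _
  have hs₀lt : s₀ < t₀ := max_lt ht₀pos (by linarith)
  have hs₀close : ∀ t ∈ Icc s₀ t₀, dist t t₀ < δ := by
    intro t ht
    rw [Real.dist_eq, abs_sub_lt_iff]
    constructor
    · linarith [ht.2]
    · have : t₀ - δ/2 ≤ s₀ := le_max_right _ _
      have := ht.1
      linarith
  have hsub : Icc s₀ t₀ ⊆ Icc (0:ℝ) T := fun t ht => ⟨hs₀0.trans ht.1, ht.2.trans ht₀Icc.2⟩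
  -- key derivative bound on Icc s₀ t₀
  have hbound : ∀ t ∈ Icc s₀ t₀, -(K : ℝ) * y t i ≤ F t (y t) i := by
    intro t ht
    have htI : t ∈ Icc (0:ℝ) T := hsub ht
    have hdist : dist (y t) (y t₀) < ε/2 := hδy htI (hs₀close t ht)
    have hyi_lt : y t i < ε/2 := by
      have h1 : dist (y t i) (y t₀ i) ≤ dist (y t) (y t₀) := dist_le_pi_dist _ _ i
      rw [ht₀i, Real.dist_eq, sub_zero] at h1
      calc y t i ≤ |y t i| := le_abs_self _
        _ ≤ dist (y t) (y t₀) := h1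
        _ < ε/2 := hdist
    set z : Fin n → ℝ := Function.update (y t) i 0 with hz
    have hznn : ∀ j, 0 ≤ z j := by
      intro j
      rcases eq_or_ne j i with rfl | hj
      · simp [hz]
      · simpa [hz, Function.update_of_ne hj] using hynn t htI j
    have hzi : z i = 0 := by simp [hz]
    have hFz : F t z i = 0 := hFi t htI z hznn hzi
    have hdyz : dist (y t) z ≤ y t i := by
      rw [dist_pi_le_iff (hynn t htI i)]
      intro j
      rcases eq_or_ne j i with rfl | hj
      · simp [hz, Real.dist_eq, abs_of_nonneg (hynn t htI j)]
      · simp only [hz, Function.update_of_ne hj, dist_self]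
        exact hynn t htI i
    have hyball : y t ∈ Metric.ball (y t₀) ε := by
      rw [Metric.mem_ball]; linarith
    have hzball : z ∈ Metric.ball (y t₀) ε := by
      rw [Metric.mem_ball]
      calc dist z (y t₀) ≤ dist z (y t) + dist (y t) (y t₀) := dist_triangle _ _ _
        _ ≤ y t i + dist (y t) (y t₀) := by rw [dist_comm z (y t)]; linarith [hdyz]
        _ < ε/2 + ε/2 := by have := hynn t htI i; linarith
        _ = ε := by ring
    have hlip := (hK t htI).dist_le_mul (y t) hyball z hzball
    have h1 : dist (F t (y t) i) (F t z i) ≤ dist (F t (y t)) (F t z) :=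
      dist_le_pi_dist _ _ i
    rw [hFz, Real.dist_eq, sub_zero] at h1
    have h2 : |F t (y t) i| ≤ (K : ℝ) * y t i := by
      calc |F t (y t) i| ≤ dist (F t (y t)) (F t z) := h1
        _ ≤ (K : ℝ) * dist (y t) z := hlip
        _ ≤ (K : ℝ) * y t i := by
            exact mul_le_mul_of_nonneg_left hdyz K.coe_nonneg
    have := neg_abs_le (F t (y t) i)
    nlinarith [abs_nonneg (F t (y t) i)]
  -- the function g t = y t i * exp (K t) is monotone on Icc s₀ t₀
  set g : ℝ → ℝ := fun t => y t i * Real.exp ((K:ℝ) * t) with hg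
  have hgmono : MonotoneOn g (Icc s₀ t₀) := by
    apply monotoneOn_of_hasDerivWithinAt_nonneg (convex_Icc s₀ t₀)
      (f' := fun t => F t (y t) i * Real.exp ((K:ℝ)*t)
        + y t i * ((K:ℝ) * Real.exp ((K:ℝ)*t)))
    · exact (hyic.mono hsub).mul (Continuous.continuousOn
        ((continuous_const.mul continuous_id).rexp))
    · intro t ht
      rw [interior_Icc] at ht
      have htI : t ∈ Icc (0:ℝ) T := hsub ⟨ht.1.le, ht.2.le⟩
      have hnhds : Icc (0:ℝ) T ∈ nhds t := by
        apply Icc_mem_nhds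
        · exact lt_of_le_of_lt hs₀0 ht.1
        · exact lt_of_lt_of_le ht.2 ht₀Icc.2
      have hyda : HasDerivAt y (F t (y t)) t := (hy t htI).hasDerivAt hnhds
      have hyi : HasDerivAt (fun t => y t i) (F t (y t) i) t := by
        exact (ContinuousLinearMap.proj i : (Fin n → ℝ) →L[ℝ] ℝ).hasFDerivAt.comp_hasDerivAt
          t hyda
      have hexp : HasDerivAt (fun t => Real.exp ((K:ℝ)*t)) ((K:ℝ) * Real.exp ((K:ℝ)*t)) t := by
        have h1 : HasDerivAt (fun t : ℝ => (K:ℝ)*t) (K:ℝ) t := by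
          simpa using (hasDerivAt_id t).const_mul (K:ℝ)
        simpa [mul_comm] using h1.exp
      exact ((hyi.mul hexp).hasDerivWithinAt)
    · intro t ht
      rw [interior_Icc] at ht
      have hb := hbound t ⟨ht.1.le, ht.2.le⟩
      have hexp_pos : 0 < Real.exp ((K:ℝ)*t) := Real.exp_pos _
      nlinarith
  have h1 : g s₀ ≤ g t₀ := hgmono (left_mem_Icc.mpr hs₀lt.le) (right_mem_Icc.mpr hs₀lt.le) hs₀lt.le
  have h2 : g t₀ = 0 := by simp [hg, ht₀i]
  have h3 : 0 < g s₀ := by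
    have := hpos s₀ ⟨hs₀0, hs₀lt⟩
    exact mul_pos this (Real.exp_pos _)
  linarith
end

section
/- Let n ≥ 1, T > 0, and let F : [0,T] × ℝⁿ → ℝⁿ be continuous. Fix i ∈ {1,…,n} and suppose F_i(t, z) > 0 for every t ∈ [0,T] and every z ∈ ℝ₊ⁿ with z_i = 0. Let y : [0,T] → ℝⁿ be differentiable with y'(t) = F(t, y(t)) and y(t) ∈ ℝ₊ⁿ for all t ∈ [0,T]. If y_i(0) > 0, then y_i(t) > 0 for all t ∈ [0,T]. -/
open Set Filter Topology

/-- if F_i is strictly positive on the face {z_i = 0} of the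
closed positive orthant and the nonnegative solution starts with
y_i(0) > 0, then y_i(t) > 0 on [0,T]. -/
theorem stmt12
    (n : ℕ) (hn : 1 ≤ n) (T : ℝ) (hT : 0 < T)
    (F : ℝ → (Fin n → ℝ) → (Fin n → ℝ))
    (hFcont : ContinuousOn (Function.uncurry F) (Icc 0 T ×ˢ (univ : Set (Fin n → ℝ))))
    (i : Fin n)
    (hFi : ∀ t ∈ Icc (0 : ℝ) T, ∀ z : Fin n → ℝ,
      (∀ j, 0 ≤ z j) → z i = 0 → 0 < F t z i)
    (y : ℝ → (Fin n → ℝ))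
    (hy : ∀ t ∈ Icc (0 : ℝ) T, HasDerivWithinAt y (F t (y t)) (Icc 0 T) t)
    (hynn : ∀ t ∈ Icc (0 : ℝ) T, ∀ j, 0 ≤ y t j)
    (h0 : 0 < y 0 i) :
    ∀ t ∈ Icc (0 : ℝ) T, 0 < y t i := by
  intro t ht
  by_contra hcon
  push_neg at hcon
  have hti : y t i = 0 := le_antisymm hcon (hynn t ht i)
  -- set of zeros
  set S : Set ℝ := {u | u ∈ Icc (0 : ℝ) T ∧ y u i = 0} with hS
  have hScont : ContinuousOn (fun u => y u i) (Icc 0 T) := fun u hu =>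
    (continuous_apply i).continuousWithinAt.comp (hy u hu).continuousWithinAt (mapsTo_univ _ _)
  have hSclosed : IsClosed S := by
    have : S = Icc 0 T ∩ (fun u => y u i) ⁻¹' {0} := by
      ext u; simp only [hS, mem_setOf_eq, mem_inter_iff, mem_preimage, mem_singleton_iff]
    rw [this]
    exact hScont.preimage_isClosed_of_isClosed isClosed_Icc isClosed_singleton
  have hSne : S.Nonempty := ⟨t, ht, hti⟩
  have hSbdd : BddBelow S := ⟨0, fun u hu => hu.1.1⟩
  set s := sInf S with hs
  have hsS : s ∈ S := hSclosed.csInf_mem hSne hSbdd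
  have hsIcc : s ∈ Icc (0 : ℝ) T := hsS.1
  have hsi : y s i = 0 := hsS.2
  have hspos : 0 < s := by
    rcases lt_or_eq_of_le hsIcc.1 with h | h
    · exact h
    · exfalso; rw [← h] at hsi; exact absurd hsi (ne_of_gt h0)
  -- before s, y i > 0
  have hbefore : ∀ u, 0 ≤ u → u < s → 0 < y u i := by
    intro u hu0 hus
    have huIcc : u ∈ Icc (0 : ℝ) T := ⟨hu0, le_trans hus.le hsIcc.2⟩
    rcases lt_or_eq_of_le (hynn u huIcc i) with h | h
    · exact h
    · exfalso
      have : u ∈ S := ⟨huIcc, h.symm⟩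
      exact absurd (csInf_le hSbdd this) (not_le.mpr hus)
  -- derivative of component i at s
  have hd : HasDerivWithinAt (fun u => y u i) (F s (y s) i) (Icc 0 s) s := by
    have h1 : HasDerivWithinAt y (F s (y s)) (Icc 0 T) s := hy s hsIcc
    have h2 : HasDerivWithinAt (fun u => y u i) (F s (y s) i) (Icc 0 T) s := by
      have := (ContinuousLinearMap.proj (R := ℝ) (φ := fun _ : Fin n => ℝ) i).hasFDerivAt.comp_hasDerivWithinAt s h1
      exact this
    exact h2.mono (Icc_subset_Icc le_rfl hsIcc.2)
  have hdpos : 0 < F s (y s) i := hFi s hsIcc (y s) (hynn s hsIcc) hsi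
  -- slopes from the left are nonpositive
  rw [hasDerivWithinAt_iff_tendsto_slope] at hd
  have hne : (𝓝[Icc 0 s \ {s}] s).NeBot := by
    refine mem_closure_iff_nhdsWithin_neBot.mp ?_
    have : Icc (0:ℝ) s \ {s} = Ico 0 s := by
      ext u
      simp only [mem_diff, mem_Icc, mem_singleton_iff, mem_Ico]
      constructor
      · rintro ⟨⟨h1, h2⟩, h3⟩; exact ⟨h1, lt_of_le_of_ne h2 h3⟩
      · rintro ⟨h1, h2⟩; exact ⟨⟨h1, h2.le⟩, h2.ne⟩
    rw [this, closure_Ico hspos.ne]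
    exact ⟨hspos.le, le_rfl⟩
  have hle : F s (y s) i ≤ 0 := by
    refine le_of_tendsto hd ?_
    filter_upwards [self_mem_nhdsWithin] with u hu
    obtain ⟨⟨hu0, hus⟩, hune⟩ := hu
    have hus' : u < s := lt_of_le_of_ne hus hune
    have hnum : 0 < y u i := hbefore u hu0 hus'
    have : slope (fun u => y u i) s u = (y u i) / (u - s) := by
      simp [slope, hsi, div_eq_inv_mul]
    rw [this]
    exact le_of_lt (div_neg_of_pos_of_neg hnum (by linarith))
  linarith
end

section
/- Let n ≥ 1, T > 0, and let F : [0,T] × ℝⁿ → ℝⁿ be continuous. Fix i ∈ {1,…,n} and suppose F_i(t, z) > 0 for every t ∈ [0,T] and every z ∈ ℝ₊ⁿ with z_i = 0. Let y : [0,T] → ℝⁿ be differentiable with y'(t) = F(t, y(t)) and y(t) ∈ ℝ₊ⁿ for all t ∈ [0,T]. If y_i(0) = 0, then y_i(t) > 0 for all t ∈ (0,T]. -/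
open Set Filter Topology

/-- if F_i is strictly positive on the face {z_i = 0} of the
closed positive orthant and the nonnegative solution starts with
y_i(0) = 0, then y_i(t) > 0 for all t ∈ (0,T]. -/
theorem stmt13
    (n : ℕ) (hn : 1 ≤ n) (T : ℝ) (hT : 0 < T)
    (F : ℝ → (Fin n → ℝ) → (Fin n → ℝ))
    (hFcont : ContinuousOn (Function.uncurry F) (Icc 0 T ×ˢ (univ : Set (Fin n → ℝ))))
    (i : Fin n)
    (hFi : ∀ t ∈ Icc (0 : ℝ) T, ∀ z : Fin n → ℝ,
      (∀ j, 0 ≤ z j) → z i = 0 → 0 < F t z i)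
    (y : ℝ → (Fin n → ℝ))
    (hy : ∀ t ∈ Icc (0 : ℝ) T, HasDerivWithinAt y (F t (y t)) (Icc 0 T) t)
    (hynn : ∀ t ∈ Icc (0 : ℝ) T, ∀ j, 0 ≤ y t j)
    (h0 : y 0 i = 0) :
    ∀ t ∈ Ioc (0 : ℝ) T, 0 < y t i := by
  rintro t ⟨ht0, htT⟩
  by_contra hle
  have htmem : t ∈ Icc (0 : ℝ) T := ⟨ht0.le, htT⟩
  have hzero : y t i = 0 := le_antisymm (not_lt.mp hle) (hynn t htmem i)
  have hd : 0 < F t (y t) i := hFi t htmem (y t) (hynn t htmem) hzero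
  -- component derivative
  have hg : HasDerivWithinAt (fun s => y s i) (F t (y t) i) (Icc 0 t) t :=
    ((hasDerivWithinAt_pi.mp (hy t htmem)) i).mono (Icc_subset_Icc le_rfl htT)
  rw [hasDerivWithinAt_iff_tendsto_slope] at hg
  -- the filter is nontrivial since 0 < t
  have hsub : Ico (0 : ℝ) t ⊆ Icc 0 t \ {t} := fun s hs =>
    ⟨⟨hs.1, hs.2.le⟩, by simpa using ne_of_lt hs.2⟩
  haveI hne : (𝓝[Icc (0:ℝ) t \ {t}] t).NeBot := by
    refine mem_closure_iff_nhdsWithin_neBot.mp ?_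
    have : t ∈ closure (Ico (0:ℝ) t) := by
      rw [closure_Ico (ne_of_lt ht0)]; exact ⟨ht0.le, le_rfl⟩
    exact closure_mono hsub this
  -- slopes are nonpositive
  have hslope : ∀ᶠ s in 𝓝[Icc (0:ℝ) t \ {t}] t,
      slope (fun s => y s i) t s ≤ 0 := by
    filter_upwards [self_mem_nhdsWithin] with s hs
    have hs' : s < t := lt_of_le_of_ne hs.1.2 (by simpa using hs.2)
    have hnum : 0 ≤ y s i - y t i := by
      rw [hzero, sub_zero]
      exact hynn s ⟨hs.1.1, hs.1.2.trans htT⟩ i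
    have hden : s - t < 0 := sub_neg.mpr hs'
    simp only [slope, vsub_eq_sub, smul_eq_mul]
    exact mul_nonpos_of_nonpos_of_nonneg (inv_nonpos.mpr hden.le) hnum

  have : F t (y t) i ≤ 0 := le_of_tendsto hg hslope
  exact absurd this (not_le.mpr hd)
end

section
/- Let M ≥ 2, Δx > 0, T > 0, and let C, D, f : ℝ → ℝ be locally Lipschitz functions with C(0) ≥ 0, D(0) ≥ 0 and f(0) ≥ 0. Let a, b : [0,T] → ℝ be continuous with a(t) ≥ 0 and b(t) ≥ 0 for all t ∈ [0,T]. Let u₁,…,u_{M−1} : [0,T] → ℝ be differentiable functions satisfying, for i = 1,…,M−1, u_i'(t) = −C(u_i(t))·(u_i(t) − u_{i−1}(t))/Δx + D(u_i(t))·(u_{i+1}(t) − 2u_i(t) + u_{i−1}(t))/(Δx)² + f(u_i(t)), where u₀(t) := a(t) and u_M(t) := b(t). If u_i(0) ≥ 0 for all i = 1,…,M−1, then u_i(t) ≥ 0 for all t ∈ [0,T] and all i = 1,…,M−1. -/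
open Set Filter Topology

private lemma aux_bdd (T : ℝ) (u : ℕ → ℝ → ℝ) :
    ∀ N : ℕ, (∀ i ≤ N, ContinuousOn (u i) (Icc (0:ℝ) T)) →
    ∃ R : ℝ, 0 < R ∧ ∀ i ≤ N, ∀ t ∈ Icc (0:ℝ) T, |u i t| ≤ R := by
  intro N
  induction N with
  | zero =>
    intro h
    obtain ⟨c, hc⟩ := isCompact_Icc.exists_bound_of_continuousOn (h 0 le_rfl)
    refine ⟨max c 1, lt_of_lt_of_le one_pos (le_max_right _ _), ?_⟩
    intro i hi t ht
    have hi0 : i = 0 := Nat.le_zero.mp hi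
    subst hi0
    exact le_trans (by simpa [Real.norm_eq_abs] using hc t ht) (le_max_left _ _)
  | succ n ih =>
    intro h
    obtain ⟨R, hR0, hR⟩ := ih (fun i hi => h i (le_trans hi (Nat.le_succ n)))
    obtain ⟨c, hc⟩ := isCompact_Icc.exists_bound_of_continuousOn (h (n+1) le_rfl)
    refine ⟨max R c, lt_of_lt_of_le hR0 (le_max_left _ _), ?_⟩
    intro i hi t ht
    rcases Nat.lt_or_ge i (n+1) with h' | h'
    · exact le_trans (hR i (by omega) t ht) (le_max_left _ _)
    · have hieq : i = n + 1 := le_antisymm hi h'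
      subst hieq
      exact le_trans (by simpa [Real.norm_eq_abs] using hc t ht) (le_max_right _ _)

private lemma aux_lip (g : ℝ → ℝ) (hg : LocallyLipschitz g) :
    ∃ r L : ℝ, 0 < r ∧ 0 ≤ L ∧ ∀ x : ℝ, |x| ≤ r → |g x - g 0| ≤ L * |x| := by
  obtain ⟨Kg, t, ht, hl⟩ := hg 0
  obtain ⟨r, hr, hball⟩ := Metric.mem_nhds_iff.mp ht
  refine ⟨r/2, Kg, by linarith, Kg.coe_nonneg, fun x hx => ?_⟩
  have hx0 : x ∈ t := by
    apply hball
    simp only [Metric.mem_ball, Real.dist_eq, sub_zero]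
    exact lt_of_le_of_lt hx (by linarith)
  have h0 : (0:ℝ) ∈ t := hball (Metric.mem_ball_self hr)
  have := hl.dist_le_mul x hx0 0 h0
  simpa [Real.dist_eq] using this

set_option maxHeartbeats 1000000 in
private lemma aux_num (Cv C0 Lδ wv R2 : ℝ) (h1 : -Lδ ≤ Cv - C0) (h2 : 0 ≤ C0)
    (h3 : 0 ≤ wv) (h4 : wv ≤ R2) (h5 : 0 ≤ Lδ) : -(R2*Lδ) ≤ Cv * wv := by
  nlinarith [mul_nonneg (by linarith : (0:ℝ) ≤ Cv - C0 + Lδ) h3, mul_nonneg h2 h3,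
    mul_le_mul_of_nonneg_left h4 h5]

/-- positivity invariance of the method-of-lines
discretization (eq. (PDE5)) of the advection–diffusion–reaction PDE. -/
theorem stmt14
    (M : ℕ) (hM : 2 ≤ M) (Δx T : ℝ) (hΔx : 0 < Δx) (hT : 0 < T)
    (C D f : ℝ → ℝ)
    (hC : LocallyLipschitz C) (hD : LocallyLipschitz D) (hf : LocallyLipschitz f)
    (hC0 : 0 ≤ C 0) (hD0 : 0 ≤ D 0) (hf0 : 0 ≤ f 0)
    (a b : ℝ → ℝ)
    (ha : ContinuousOn a (Icc 0 T)) (hb : ContinuousOn b (Icc 0 T))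
    (hann : ∀ t ∈ Icc (0 : ℝ) T, 0 ≤ a t) (hbnn : ∀ t ∈ Icc (0 : ℝ) T, 0 ≤ b t)
    (u : ℕ → ℝ → ℝ)
    (hu0 : ∀ t ∈ Icc (0 : ℝ) T, u 0 t = a t)
    (huM : ∀ t ∈ Icc (0 : ℝ) T, u M t = b t)
    (hode : ∀ i : ℕ, 1 ≤ i → i ≤ M - 1 → ∀ t ∈ Icc (0 : ℝ) T,
      HasDerivWithinAt (u i)
        (-(C (u i t)) * (u i t - u (i - 1) t) / Δx
          + D (u i t) * (u (i + 1) t - 2 * u i t + u (i - 1) t) / Δx ^ 2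
          + f (u i t)) (Icc 0 T) t)
    (hinit : ∀ i : ℕ, 1 ≤ i → i ≤ M - 1 → 0 ≤ u i 0) :
    ∀ i : ℕ, 1 ≤ i → i ≤ M - 1 → ∀ t ∈ Icc (0 : ℝ) T, 0 ≤ u i t := by
  -- continuity of all components
  have hcontI : ∀ i, 1 ≤ i → i ≤ M - 1 → ContinuousOn (u i) (Icc 0 T) :=
    fun i h1 h2 t ht => (hode i h1 h2 t ht).continuousWithinAt
  have hcont : ∀ i ≤ M, ContinuousOn (u i) (Icc 0 T) := by
    intro i hi
    rcases Nat.eq_zero_or_pos i with h0 | h1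
    · subst h0; exact ha.congr hu0
    rcases eq_or_lt_of_le hi with hM' | hlt
    · subst hM'; exact hb.congr huM
    · exact hcontI i h1 (by omega)
  obtain ⟨R, hRpos, hR⟩ := aux_bdd T u M hcont
  obtain ⟨rC, LC, hrC, hLC, hlipC⟩ := aux_lip C hC
  obtain ⟨rD, LD, hrD, hLD, hlipD⟩ := aux_lip D hD
  obtain ⟨rf, Lf, hrf, hLf, hlipf⟩ := aux_lip f hf
  set r₀ := min rC (min rD rf) with hr₀def
  have hr₀ : 0 < r₀ := lt_min hrC (lt_min hrD hrf)
  set L := max LC (max LD Lf) with hLdef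
  have hL : 0 ≤ L := le_trans hLC (le_max_left _ _)
  have hlipC' : ∀ x : ℝ, |x| ≤ r₀ → |C x - C 0| ≤ L * |x| := fun x hx =>
    le_trans (hlipC x (le_trans hx (min_le_left _ _)))
      (mul_le_mul_of_nonneg_right (le_max_left _ _) (abs_nonneg x))
  have hlipD' : ∀ x : ℝ, |x| ≤ r₀ → |D x - D 0| ≤ L * |x| := fun x hx =>
    le_trans (hlipD x (le_trans hx (le_trans (min_le_right _ _) (min_le_left _ _))))
      (mul_le_mul_of_nonneg_right (le_trans (le_max_left _ _) (le_max_right _ _)) (abs_nonneg x))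
  have hlipf' : ∀ x : ℝ, |x| ≤ r₀ → |f x - f 0| ≤ L * |x| := fun x hx =>
    le_trans (hlipf x (le_trans hx (le_trans (min_le_right _ _) (min_le_right _ _))))
      (mul_le_mul_of_nonneg_right (le_trans (le_max_right _ _) (le_max_right _ _)) (abs_nonneg x))
  set K' := L * (2*R/Δx + 4*R/Δx^2 + 1) with hK'def
  have hK'nn : 0 ≤ K' := by
    apply mul_nonneg hL
    have h1 : 0 ≤ 2*R/Δx := div_nonneg (by linarith) hΔx.le
    have h2 : 0 ≤ 4*R/Δx^2 := div_nonneg (by linarith) (by positivity)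
    linarith
  set K := K' + 1 with hKdef
  have hKnn : 0 ≤ K := by linarith
  set ε₁ := r₀ / Real.exp (K*T) with hε₁def
  have hε₁ : 0 < ε₁ := div_pos hr₀ (Real.exp_pos _)
  -- main barrier claim
  have main : ∀ ε : ℝ, 0 < ε → ε ≤ ε₁ → ∀ j, 1 ≤ j → j ≤ M - 1 →
      ∀ t ∈ Icc (0:ℝ) T, 0 < u j t + ε * Real.exp (K * t) := by
    intro ε hε hεle
    by_contra hcon
    push_neg at hcon
    obtain ⟨j₀, hj₀1, hj₀2, t₀, ht₀, hle₀⟩ := hcon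
    set E := ⋃ j ∈ Finset.Icc 1 (M-1), {t ∈ Icc (0:ℝ) T | u j t + ε * Real.exp (K * t) ≤ 0}
      with hEdef
    have hEmem : ∀ t, t ∈ E ↔
        ∃ j, 1 ≤ j ∧ j ≤ M-1 ∧ t ∈ Icc (0:ℝ) T ∧ u j t + ε * Real.exp (K*t) ≤ 0 := by
      intro t
      simp only [hEdef, Set.mem_iUnion, Finset.mem_Icc, Set.mem_setOf_eq, exists_prop]
      constructor
      · rintro ⟨j, ⟨h1, h2⟩, h3, h4⟩; exact ⟨j, h1, h2, h3, h4⟩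
      · rintro ⟨j, h1, h2, h3, h4⟩; exact ⟨j, ⟨h1, h2⟩, h3, h4⟩
    have hEne : E.Nonempty := ⟨t₀, (hEmem t₀).2 ⟨j₀, hj₀1, hj₀2, ht₀, hle₀⟩⟩
    have hEclosed : IsClosed E := by
      apply isClosed_biUnion_finset
      intro j hj
      have hjM : j ≤ M := by simp only [Finset.mem_Icc] at hj; omega
      have hjc : ContinuousOn (fun t => u j t + ε * Real.exp (K*t)) (Icc 0 T) :=
        (hcont j hjM).add ((continuous_const.mul (Real.continuous_exp.comp (continuous_const.mul continuous_id))).continuousOn)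
      have heq : {t ∈ Icc (0:ℝ) T | u j t + ε * Real.exp (K*t) ≤ 0}
          = Icc (0:ℝ) T ∩ (fun t => u j t + ε * Real.exp (K*t)) ⁻¹' (Iic 0) := rfl
      rw [heq]
      exact hjc.preimage_isClosed_of_isClosed isClosed_Icc isClosed_Iic
    have hEbdd : BddBelow E := by
      refine ⟨0, fun t htE => ?_⟩
      obtain ⟨j, _, _, htI, _⟩ := (hEmem t).1 htE
      exact htI.1
    set t₁ := sInf E with ht₁def
    have ht₁E : t₁ ∈ E := hEclosed.csInf_mem hEne hEbdd
    obtain ⟨i, hi1, hi2, ht₁Icc, ht₁le⟩ := (hEmem t₁).1 ht₁E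
    have ht₁pos : 0 < t₁ := by
      rcases lt_or_eq_of_le ht₁Icc.1 with h | h
      · exact h
      · exfalso
        rw [← h] at ht₁le
        rw [mul_zero, Real.exp_zero, mul_one] at ht₁le
        linarith only [ht₁le, hε, hinit i hi1 hi2]
    have hbefore : ∀ s, 0 ≤ s → s < t₁ → ∀ j, 1 ≤ j → j ≤ M-1 →
        0 < u j s + ε * Real.exp (K*s) := by
      intro s hs hst j hj1 hj2
      by_contra hneg
      push_neg at hneg
      have hsE : s ∈ E := (hEmem s).2 ⟨j, hj1, hj2, ⟨hs, le_trans hst.le ht₁Icc.2⟩, hneg⟩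
      exact absurd (csInf_le hEbdd hsE) (not_le.mpr hst)
    have hne : (𝓝[Ico (0:ℝ) t₁] t₁).NeBot := by
      rw [← mem_closure_iff_nhdsWithin_neBot, closure_Ico (ne_of_gt ht₁pos).symm]
      exact ⟨ht₁pos.le, le_rfl⟩
    have hgeq : ∀ j, 1 ≤ j → j ≤ M-1 → 0 ≤ u j t₁ + ε * Real.exp (K*t₁) := by
      intro j hj1 hj2
      have hjc : ContinuousWithinAt (fun t => u j t + ε * Real.exp (K*t)) (Icc 0 t₁) t₁ := by
        apply ContinuousWithinAt.mono _ (Icc_subset_Icc le_rfl ht₁Icc.2)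
        exact ((hcont j (by omega)).add ((continuous_const.mul (Real.continuous_exp.comp (continuous_const.mul continuous_id))).continuousOn)) t₁ ht₁Icc
      have htend : Filter.Tendsto (fun t => u j t + ε * Real.exp (K*t)) (𝓝[Ico 0 t₁] t₁)
          (𝓝 (u j t₁ + ε * Real.exp (K*t₁))) := hjc.mono Ico_subset_Icc_self
      refine ge_of_tendsto htend ?_
      filter_upwards [self_mem_nhdsWithin] with s hs
      exact (hbefore s hs.1 hs.2 j hj1 hj2).le
    have hEq : u i t₁ + ε * Real.exp (K*t₁) = 0 := le_antisymm ht₁le (hgeq i hi1 hi2)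
    set δ := ε * Real.exp (K * t₁) with hδdef
    have hδpos : 0 < δ := mul_pos hε (Real.exp_pos _)
    have hvi : u i t₁ = -δ := by linarith only [hEq]
    have hδr₀ : δ ≤ r₀ := by
      have h1 : Real.exp (K*t₁) ≤ Real.exp (K*T) :=
        Real.exp_le_exp.mpr (mul_le_mul_of_nonneg_left ht₁Icc.2 hKnn)
      calc δ = ε * Real.exp (K*t₁) := hδdef
        _ ≤ ε₁ * Real.exp (K*T) :=
            mul_le_mul hεle h1 (Real.exp_pos _).le hε₁.le
        _ = r₀ := by rw [hε₁def]; field_simp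
    -- neighbor bounds
    have hw : -δ ≤ u (i-1) t₁ := by
      rcases Nat.lt_or_ge i 2 with h | h
      · have hi0 : i - 1 = 0 := by omega
        rw [hi0, hu0 t₁ ht₁Icc]
        linarith only [hann t₁ ht₁Icc, hδpos]
      · have h := hgeq (i-1) (by omega) (by omega); linarith only [h]
    have hz : -δ ≤ u (i+1) t₁ := by
      rcases Nat.lt_or_ge i (M-1) with h | h
      · have h := hgeq (i+1) (by omega) (by omega); linarith only [h]
      · have hiM : i + 1 = M := by omega
        rw [hiM, huM t₁ ht₁Icc]
        linarith only [hbnn t₁ ht₁Icc, hδpos]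
    have hvR : |u i t₁| ≤ R := hR i (by omega) t₁ ht₁Icc
    have hwR : |u (i-1) t₁| ≤ R := hR (i-1) (by omega) t₁ ht₁Icc
    have hzR : |u (i+1) t₁| ≤ R := hR (i+1) (by omega) t₁ ht₁Icc
    have habsδ : |u i t₁| = δ := by rw [hvi, abs_neg, abs_of_pos hδpos]
    have hδR : δ ≤ R := by rw [habsδ] at hvR; exact hvR
    have habs : |u i t₁| ≤ r₀ := by rw [habsδ]; exact hδr₀
    have hCb : |C (u i t₁) - C 0| ≤ L * δ := by
      have h := hlipC' _ habs; rwa [habsδ] at h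
    have hDb : |D (u i t₁) - D 0| ≤ L * δ := by
      have h := hlipD' _ habs; rwa [habsδ] at h
    have hfb : |f (u i t₁) - f 0| ≤ L * δ := by
      have h := hlipf' _ habs; rwa [habsδ] at h
    -- derivative of the shifted function at t₁
    have hd := hode i hi1 hi2 t₁ ht₁Icc
    have hφ : HasDerivAt (fun s : ℝ => ε * Real.exp (K*s)) (ε * (Real.exp (K*t₁) * (K*1))) t₁ :=
      (((hasDerivAt_id t₁).const_mul K).exp).const_mul ε
    set v := u i t₁ with hvdef
    set w := u (i-1) t₁ with hwdef
    set z := u (i+1) t₁ with hzdef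
    set dtot := -(C v) * (v - w) / Δx + D v * (z - 2*v + w) / Δx^2 + f v with hdtotdef
    have hgder : HasDerivWithinAt (fun s => u i s + ε * Real.exp (K*s))
        (dtot + ε * (Real.exp (K*t₁) * (K*1))) (Icc 0 t₁) t₁ :=
      (hd.add hφ.hasDerivWithinAt).mono (Icc_subset_Icc le_rfl ht₁Icc.2)
    -- lower bound on dtot
    have hLδ : 0 ≤ L * δ := mul_nonneg hL hδpos.le
    have hC1 := (abs_le.1 hCb).1
    have hC2 := (abs_le.1 hCb).2
    have hD1 := (abs_le.1 hDb).1
    have hf1 := (abs_le.1 hfb).1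
    have hw2 : w ≤ R := (abs_le.1 hwR).2
    have hz2 : z ≤ R := (abs_le.1 hzR).2
    have hwv : 0 ≤ w - v := by rw [hvi]; linarith only [hw]
    have hwv2 : w - v ≤ 2*R := by rw [hvi]; linarith only [hw2, hδR]
    have hq1 : 0 ≤ z - 2*v + w := by rw [hvi]; linarith only [hw, hz]
    have hq2 : z - 2*v + w ≤ 4*R := by rw [hvi]; linarith only [hw2, hz2, hδR]
    have hnum1 : -(2*R*(L*δ)) ≤ -(C v) * (v - w) := by
      have h := aux_num (C v) (C 0) (L*δ) (w - v) (2*R) hC1 hC0 hwv hwv2 hLδ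
      linarith only [h]
    have hnum2 : -(4*R*(L*δ)) ≤ D v * (z - 2*v + w) := by
      have h := aux_num (D v) (D 0) (L*δ) (z - 2*v + w) (4*R) hD1 hD0 hq1 hq2 hLδ
      linarith only [h]
    have hnum3 : -(L*δ) ≤ f v := by linarith only [hf1, hf0]
    have hT1 : -(2*R*(L*δ))/Δx ≤ -(C v) * (v - w) / Δx := by
      apply div_le_div_of_nonneg_right hnum1 hΔx.le
    have hT2 : -(4*R*(L*δ))/Δx^2 ≤ D v * (z - 2*v + w) / Δx^2 := by
      apply div_le_div_of_nonneg_right hnum2 (by positivity)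
    have hdbound : -(K' * δ) ≤ dtot := by
      have e1 : -(K'*δ) = (-(2*R*(L*δ)))/Δx + (-(4*R*(L*δ)))/Δx^2 + (-(L*δ)) := by
        rw [hK'def]; field_simp; ring
      rw [hdtotdef, e1]
      linarith only [hT1, hT2, hnum3]
    have hdpos : 0 < dtot + ε * (Real.exp (K*t₁) * (K*1)) := by
      have e2 : ε * (Real.exp (K*t₁) * (K*1)) = δ * K' + δ := by
        rw [hδdef, hKdef]; ring
      rw [e2]
      linarith only [hdbound, hδpos]
    -- slope contradiction
    rw [hasDerivWithinAt_iff_tendsto_slope] at hgder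
    have hsub : Ico (0:ℝ) t₁ ⊆ Icc 0 t₁ \ {t₁} := by
      intro x hx
      exact ⟨⟨hx.1, hx.2.le⟩, fun hxx => absurd (Set.mem_singleton_iff.1 hxx) (ne_of_lt hx.2)⟩
    haveI hne2 : (𝓝[Icc (0:ℝ) t₁ \ {t₁}] t₁).NeBot :=
      hne.mono (nhdsWithin_mono t₁ hsub)
    have hslope : ∀ᶠ x in 𝓝[Icc (0:ℝ) t₁ \ {t₁}] t₁,
        slope (fun s => u i s + ε * Real.exp (K*s)) t₁ x ≤ 0 := by
      filter_upwards [self_mem_nhdsWithin] with x hx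
      have hx1 : 0 ≤ x := hx.1.1
      have hx2 : x < t₁ := lt_of_le_of_ne hx.1.2 (fun h => hx.2 (by simp [h]))
      have hgx : 0 ≤ u i x + ε * Real.exp (K*x) := (hbefore x hx1 hx2 i hi1 hi2).le
      rw [slope_def_field, hEq, sub_zero]
      exact div_nonpos_of_nonneg_of_nonpos hgx (by linarith)
    have hle0 := le_of_tendsto hgder hslope
    linarith only [hle0, hdpos]
  -- conclude from the barrier claim
  intro i hi1 hi2 t ht
  by_contra hneg
  push_neg at hneg
  set εc := min ε₁ ((-(u i t))/(2*Real.exp (K*T))) with hεcdef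
  have hεcpos : 0 < εc := lt_min hε₁ (div_pos (by linarith) (by positivity))
  have h1 := main εc hεcpos (min_le_left _ _) i hi1 hi2 t ht
  have h2 : εc * Real.exp (K*t) ≤ (-(u i t))/2 := by
    have hεle : εc ≤ (-(u i t))/(2*Real.exp (K*T)) := min_le_right _ _
    have hexp : Real.exp (K*t) ≤ Real.exp (K*T) :=
      Real.exp_le_exp.mpr (mul_le_mul_of_nonneg_left ht.2 hKnn)
    calc εc * Real.exp (K*t) ≤ ((-(u i t))/(2*Real.exp (K*T))) * Real.exp (K*T) :=
          mul_le_mul hεle hexp (Real.exp_pos _).le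
            (div_nonneg (by linarith) (by positivity))
      _ = (-(u i t))/2 := by
          field_simp
  linarith only [h1, h2, hneg]
end
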